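/- Let Q ∈ ℝ^{m×m} and B ∈ ℝ^m with (Q,B) controllable. Then for every q > 0 there exist a symmetric positive definite P ∈ ℝ^{m×m} and a row vector K_Q ∈ ℝ^{1×m} such that Sym(P(Q + B K_Q)) + qP ≺ 0. -/

import Mathlib

open Matrix

variable {m : ℕ}

lemma aux_mul_vecMulVec (A : Matrix (Fin m) (Fin m) ℝ) (v w : Fin m → ℝ) :
    A * vecMulVec v w = vecMulVec (A *ᵥ v) w := by
  ext i j
  simp only [Matrix.mul_apply, vecMulVec_apply, mulVec, dotProduct, Finset.sum_mul]
  exact Finset.sum_congr rfl fun k _ => by ring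

lemma aux_vecMulVec_mul (A : Matrix (Fin m) (Fin m) ℝ) (v w : Fin m → ℝ) :
    vecMulVec v w * A = vecMulVec v (Aᵀ *ᵥ w) := by
  ext i j
  simp only [Matrix.mul_apply, vecMulVec_apply, mulVec, dotProduct, Finset.mul_sum,
    transpose_apply]
  exact Finset.sum_congr rfl fun k _ => by ring

lemma aux_vecMulVec_mulVec (v w u : Fin m → ℝ) :
    vecMulVec v w *ᵥ u = (w ⬝ᵥ u) • v := by
  ext i
  simp only [mulVec, vecMulVec_apply, dotProduct, Pi.smul_apply, smul_eq_mul, Finset.mul_sum]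
  rw [Finset.sum_mul]
  exact Finset.sum_congr rfl fun k _ => by ring

lemma aux_vecMulVec_smul (v w : Fin m → ℝ) (c : ℝ) :
    vecMulVec v (c • w) = c • vecMulVec v w := by
  ext i j
  simp only [vecMulVec_apply, Pi.smul_apply, smul_eq_mul, Matrix.smul_apply]
  ring

lemma aux_vecMulVec_transpose (v : Fin m → ℝ) :
    (vecMulVec v v)ᵀ = vecMulVec v v := by
  ext i j
  simp only [transpose_apply, vecMulVec_apply]
  ring

noncomputable def lyapL (Q : Matrix (Fin m) (Fin m) ℝ) (lam : ℝ) :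
    Matrix (Fin m) (Fin m) ℝ →ₗ[ℝ] Matrix (Fin m) (Fin m) ℝ where
  toFun M := Q * M + M * Qᵀ + (2 * lam) • M
  map_add' M N := by
    simp only [Matrix.mul_add, Matrix.add_mul, smul_add]; abel
  map_smul' c M := by
    simp only [Matrix.mul_smul, Matrix.smul_mul, RingHom.id_apply, smul_add, smul_comm c]

variable {m : ℕ}

lemma lyapL_injective (Q : Matrix (Fin m) (Fin m) ℝ) {lam : ℝ}
    (hlam : (∑ i, ∑ k, |Q i k|) < lam)
    (L : Matrix (Fin m) (Fin m) ℝ →ₗ[ℝ] Matrix (Fin m) (Fin m) ℝ)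
    (hL : ∀ M, L M = Q * M + M * Qᵀ + (2 * lam) • M) :
    Function.Injective L := by
  set c := ∑ i, ∑ k, |Q i k| with hc
  have hc0 : 0 ≤ c := Finset.sum_nonneg fun i _ => Finset.sum_nonneg fun k _ => abs_nonneg _
  have hlam0 : 0 < lam := lt_of_le_of_lt hc0 hlam
  rw [← LinearMap.ker_eq_bot, LinearMap.ker_eq_bot']
  intro M hM
  by_contra hne
  have hex : ∃ p : Fin m × Fin m, M p.1 p.2 ≠ 0 := by
    by_contra h
    push_neg at h
    exact hne (by ext i j; exact h (i, j))
  obtain ⟨p0, hp0⟩ := hex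
  obtain ⟨p, -, hp⟩ := Finset.exists_max_image (Finset.univ : Finset (Fin m × Fin m))
      (fun p => |M p.1 p.2|) ⟨p0, Finset.mem_univ _⟩
  set a := |M p.1 p.2| with ha
  have ha0 : 0 < a := lt_of_lt_of_le (abs_pos.mpr hp0) (hp p0 (Finset.mem_univ _))
  have h1 : (Q * M) p.1 p.2 + (M * Qᵀ) p.1 p.2 + 2 * lam * M p.1 p.2 = 0 := by
    have := congrFun (congrFun (hL M ▸ hM) p.1) p.2
    simpa using this
  have key : 2 * lam * M p.1 p.2 = -((Q * M) p.1 p.2 + (M * Qᵀ) p.1 p.2) := by linarith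
  have hb1 : |(Q * M) p.1 p.2| ≤ (∑ k, |Q p.1 k|) * a := by
    rw [Matrix.mul_apply]
    refine (Finset.abs_sum_le_sum_abs _ _).trans ?_
    rw [Finset.sum_mul]
    refine Finset.sum_le_sum fun k _ => ?_
    rw [abs_mul]
    exact mul_le_mul_of_nonneg_left (hp (k, p.2) (Finset.mem_univ _)) (abs_nonneg _)
  have hb2 : |(M * Qᵀ) p.1 p.2| ≤ (∑ k, |Q p.2 k|) * a := by
    rw [Matrix.mul_apply]
    refine (Finset.abs_sum_le_sum_abs _ _).trans ?_
    rw [Finset.sum_mul]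
    refine Finset.sum_le_sum fun k _ => ?_
    rw [abs_mul, transpose_apply, mul_comm]
    exact mul_le_mul_of_nonneg_left (hp (p.1, k) (Finset.mem_univ _)) (abs_nonneg _)
  have hrow : ∀ i : Fin m, (∑ k, |Q i k|) ≤ c := fun i =>
    Finset.single_le_sum (f := fun i => ∑ k, |Q i k|)
      (fun i _ => Finset.sum_nonneg fun k _ => abs_nonneg _) (Finset.mem_univ i)
  have hfinal : 2 * lam * a ≤ 2 * c * a := by
    have : |2 * lam * M p.1 p.2| ≤ (∑ k, |Q p.1 k|) * a + (∑ k, |Q p.2 k|) * a := by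
      rw [key, abs_neg]
      exact (abs_add_le _ _).trans (add_le_add hb1 hb2)
    rw [abs_mul, abs_of_pos (by positivity : (0:ℝ) < 2 * lam)] at this
    have h2 := add_le_add (mul_le_mul_of_nonneg_right (hrow p.1) ha0.le)
      (mul_le_mul_of_nonneg_right (hrow p.2) ha0.le)
    nlinarith
  nlinarith

/-- controllability of `(Q, B)` implies, for every `q > 0`,
feasibility of the Lyapunov matrix inequality
`Sym(P(Q + B K_Q)) + qP ≺ 0` with `P ≻ 0`. -/
theorem stmt8 (m : ℕ) (Q : Matrix (Fin m) (Fin m) ℝ) (B : Fin m → ℝ)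
    (hctrb : (Matrix.of fun i j : Fin m => ((Q ^ (j : ℕ)) *ᵥ B) i).rank = m)
    (q : ℝ) (hq : 0 < q) :
    ∃ (P : Matrix (Fin m) (Fin m) ℝ) (K : Fin m → ℝ), P.PosDef ∧
      (-(((1 : ℝ) / 2) • (P * (Q + Matrix.vecMulVec B K) +
          (P * (Q + Matrix.vecMulVec B K))ᵀ) + q • P)).PosDef := by
  classical
  set c : ℝ := ∑ i, ∑ k, |Q i k| with hc
  have hc0 : 0 ≤ c := Finset.sum_nonneg fun i _ => Finset.sum_nonneg fun k _ => abs_nonneg _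
  set lam : ℝ := q + 1 + c with hlamdef
  have hlamc : c < lam := by simp only [hlamdef]; linarith
  have hlamq : q < lam := by simp only [hlamdef]; linarith
  -- the Lyapunov operator
  set L : Matrix (Fin m) (Fin m) ℝ →ₗ[ℝ] Matrix (Fin m) (Fin m) ℝ :=
    { toFun := fun M => Q * M + M * Qᵀ + (2 * lam) • M
      map_add' := fun M N => by
        simp only [Matrix.mul_add, Matrix.add_mul, smul_add]; abel
      map_smul' := fun r M => by
        simp only [Matrix.mul_smul, Matrix.smul_mul, RingHom.id_apply, smul_add,
          smul_comm r] } with hLdef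
  have hL : ∀ M, L M = Q * M + M * Qᵀ + (2 * lam) • M := fun M => rfl
  have hinj : Function.Injective L := lyapL_injective Q hlamc L hL
  have hsurj : Function.Surjective L := (LinearMap.injective_iff_surjective).mp hinj
  obtain ⟨W, hW⟩ := hsurj (vecMulVec B B)
  rw [hL] at hW
  -- W is symmetric
  have hsymm : Wᵀ = W := by
    apply hinj
    rw [hL, hL]
    calc Q * Wᵀ + Wᵀ * Qᵀ + (2 * lam) • Wᵀ
        = (Q * W + W * Qᵀ + (2 * lam) • W)ᵀ := by
          simp only [transpose_add, transpose_mul, transpose_transpose, transpose_smul]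
          abel
      _ = (vecMulVec B B)ᵀ := by rw [hW]
      _ = vecMulVec B B := aux_vecMulVec_transpose B
      _ = Q * W + W * Qᵀ + (2 * lam) • W := hW.symm
  -- Hermitian
  have hHerm : W.IsHermitian := by
    rw [Matrix.IsHermitian, conjTranspose_eq_transpose_of_trivial]; exact hsymm
  -- quadratic form bound
  have hquad : ∀ v : Fin m → ℝ, (∀ i, |v i| ≤ 1) → |v ⬝ᵥ (Q *ᵥ v)| ≤ c := by
    intro v hv
    have h1 : v ⬝ᵥ (Q *ᵥ v) = ∑ i, ∑ k, v i * (Q i k * v k) := by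
      simp [dotProduct, mulVec, Finset.mul_sum]
    rw [h1, hc]
    refine (Finset.abs_sum_le_sum_abs _ _).trans (Finset.sum_le_sum fun i _ => ?_)
    refine (Finset.abs_sum_le_sum_abs _ _).trans (Finset.sum_le_sum fun k _ => ?_)
    rw [abs_mul, abs_mul]
    calc |v i| * (|Q i k| * |v k|) ≤ 1 * (|Q i k| * 1) := by
          exact mul_le_mul (hv i) (mul_le_mul_of_nonneg_left (hv k) (abs_nonneg _))
            (by positivity) zero_le_one
      _ = |Q i k| := by ring
  -- positive semidefiniteness
  have hPSD : W.PosSemidef := by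
    refine hHerm.posSemidef_iff_eigenvalues_nonneg.mpr fun i => show (0:ℝ) ≤ _ from ?_
    by_contra hneg
    push_neg at hneg
    set μ := hHerm.eigenvalues i with hμ
    set v : Fin m → ℝ := ⇑(hHerm.eigenvectorBasis i) with hv
    have hWv : W *ᵥ v = μ • v := hHerm.mulVec_eigenvectorBasis i
    have hvnorm : ∑ k, v k * v k = 1 := by
      have h2 : ‖hHerm.eigenvectorBasis i‖ = 1 := hHerm.eigenvectorBasis.orthonormal.1 i
      have h3 : (inner ℝ (hHerm.eigenvectorBasis i) (hHerm.eigenvectorBasis i) : ℝ) = 1 := by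
        rw [real_inner_self_eq_norm_sq, h2]; norm_num
      rw [PiLp.inner_apply] at h3
      simpa [hv, RCLike.inner_apply, ← sq] using h3
    have hvone : ∀ k, |v k| ≤ 1 := by
      intro k
      have h4 := Finset.single_le_sum (f := fun k => v k * v k)
        (fun k _ => mul_self_nonneg _) (Finset.mem_univ k)
      rw [hvnorm] at h4
      nlinarith [abs_nonneg (v k), abs_mul_abs_self (v k)]
    have hvv : v ⬝ᵥ v = 1 := hvnorm
    have hvW : v ᵥ* W = μ • v := by rw [← hsymm, vecMul_transpose, hWv]
    have hmain : 2 * (μ * (v ⬝ᵥ (Q *ᵥ v))) + 2 * lam * μ = (B ⬝ᵥ v) ^ 2 := by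
      have e1 := congrArg (fun X => v ⬝ᵥ (X *ᵥ v)) hW
      simp only [add_mulVec, smul_mulVec, ← mulVec_mulVec, hWv, mulVec_smul,
        dotProduct_add, dotProduct_smul, smul_eq_mul] at e1
      rw [dotProduct_mulVec v W, hvW, smul_dotProduct] at e1
      rw [aux_vecMulVec_mulVec, dotProduct_smul] at e1
      have e2 : v ⬝ᵥ (Qᵀ *ᵥ v) = v ⬝ᵥ (Q *ᵥ v) := by
        rw [dotProduct_mulVec, vecMul_transpose, dotProduct_comm]
      rw [smul_eq_mul, smul_eq_mul, e2, hvv, dotProduct_comm v B] at e1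
      nlinarith [e1]
    have habs := abs_le.mp (hquad v hvone)
    nlinarith [sq_nonneg (B ⬝ᵥ v), habs.1, habs.2, hmain]
  -- kernel step
  have hker : ∀ u : Fin m → ℝ, W *ᵥ u = 0 → B ⬝ᵥ u = 0 ∧ W *ᵥ (Qᵀ *ᵥ u) = 0 := by
    intro u hu
    have e1 : (Q * W + W * Qᵀ + (2 * lam) • W) *ᵥ u = vecMulVec B B *ᵥ u := by rw [hW]
    rw [add_mulVec, add_mulVec, smul_mulVec, ← mulVec_mulVec, ← mulVec_mulVec, hu,
      mulVec_zero, smul_zero, add_zero, aux_vecMulVec_mulVec] at e1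
    have huW : u ᵥ* W = 0 := by rw [← hsymm, vecMul_transpose, hu]
    have e2 := congrArg (fun y => u ⬝ᵥ y) e1
    rw [zero_add, dotProduct_mulVec, huW, zero_dotProduct, dotProduct_smul,
      smul_eq_mul, dotProduct_comm u B] at e2
    have hBu : B ⬝ᵥ u = 0 := by nlinarith [e2]
    refine ⟨hBu, ?_⟩
    rw [zero_add] at e1
    rw [e1, hBu, zero_smul]
  have hkerzero : ∀ u : Fin m → ℝ, W *ᵥ u = 0 → u = 0 := by
    intro u hu
    have hchain : ∀ j : ℕ, W *ᵥ ((Qᵀ) ^ j *ᵥ u) = 0 := by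
      intro j
      induction j with
      | zero => simpa using hu
      | succ j ih =>
          have h6 := (hker _ ih).2
          rwa [mulVec_mulVec u Qᵀ (Qᵀ ^ j), ← pow_succ'] at h6
    have hBperp : ∀ j : ℕ, B ⬝ᵥ ((Qᵀ) ^ j *ᵥ u) = 0 := fun j => (hker _ (hchain j)).1
    by_contra hune
    set C : Matrix (Fin m) (Fin m) ℝ :=
      Matrix.of fun i j : Fin m => ((Q ^ (j : ℕ)) *ᵥ B) i with hCdef
    have hCu : Cᵀ *ᵥ u = 0 := by
      ext j
      have h5 := hBperp (j : ℕ)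
      rw [dotProduct_mulVec, ← transpose_pow, vecMul_transpose] at h5
      simp only [mulVec, dotProduct, transpose_apply, hCdef, Matrix.of_apply,
        Pi.zero_apply] at h5 ⊢
      exact h5
    have hCrank : (Cᵀ).rank = m := by rw [Matrix.rank_transpose]; exact hctrb
    have hkerpos : 0 < Module.finrank ℝ (LinearMap.ker (Cᵀ).mulVecLin) := by
      rw [Module.finrank_pos_iff_exists_ne_zero]
      refine ⟨⟨u, ?_⟩, ?_⟩
      · rw [LinearMap.mem_ker, mulVecLin_apply]; exact hCu
      · simp only [ne_eq, Submodule.mk_eq_zero]; exact hune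
    have hrn := LinearMap.finrank_range_add_finrank_ker (Cᵀ).mulVecLin
    rw [Module.finrank_fin_fun] at hrn
    have : (Cᵀ).rank = Module.finrank ℝ (LinearMap.range (Cᵀ).mulVecLin) := rfl
    omega
  -- positive definiteness of W
  have hWpd : W.PosDef := by
    refine PosDef.of_dotProduct_mulVec_pos hHerm fun x hx => ?_
    have hstar : star x = x := by
      funext k; simp
    rw [hstar]
    have h0 : 0 ≤ x ⬝ᵥ (W *ᵥ x) := by
      have := hPSD.dotProduct_mulVec_nonneg x
      rwa [hstar] at this
    rcases eq_or_lt_of_le h0 with he | h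
    · exfalso
      have hWx : W *ᵥ x = 0 := by
        refine (hPSD.dotProduct_mulVec_zero_iff x).mp ?_
        rw [hstar]; exact he.symm
      exact hx (hkerzero x hWx)
    · exact h
  -- the inverse P and feedback K
  have hdet : IsUnit W.det := (Matrix.isUnit_iff_isUnit_det W).mp hWpd.isUnit
  set P : Matrix (Fin m) (Fin m) ℝ := W⁻¹ with hPdef
  have hPW : P * W = 1 := Matrix.nonsing_inv_mul W hdet
  have hWP : W * P = 1 := Matrix.mul_nonsing_inv W hdet
  have hPpd : P.PosDef := hWpd.inv
  have hPsymm : Pᵀ = P := by rw [hPdef, Matrix.transpose_nonsing_inv, hsymm]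
  -- congruence of the Lyapunov identity by P
  have t1 : P * (Q * W) * P = P * Q := by
    rw [Matrix.mul_assoc P (Q * W) P, Matrix.mul_assoc Q W P, hWP, Matrix.mul_one]
  have t2 : P * (W * Qᵀ) * P = Qᵀ * P := by
    rw [← Matrix.mul_assoc P W Qᵀ, hPW, Matrix.one_mul]
  have t3 : P * ((2 * lam) • W) * P = (2 * lam) • P := by
    rw [Matrix.mul_smul, Matrix.smul_mul, hPW, Matrix.one_mul]
  have t4 : P * vecMulVec B B * P = vecMulVec (P *ᵥ B) (P *ᵥ B) := by
    rw [aux_mul_vecMulVec, aux_vecMulVec_mul, hPsymm]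
  have hW2 : P * Q + Qᵀ * P + (2 * lam) • P = vecMulVec (P *ᵥ B) (P *ᵥ B) := by
    have e := congrArg (fun X => P * X * P) hW
    simp only [Matrix.mul_add, Matrix.add_mul] at e
    rw [t1, t2, t3, t4] at e
    exact e
  set K : Fin m → ℝ := (-(1/2) : ℝ) • (P *ᵥ B) with hK
  refine ⟨P, K, hPpd, ?_⟩
  set H : Matrix (Fin m) (Fin m) ℝ := vecMulVec (P *ᵥ B) (P *ᵥ B) with hH
  have hHsym : Hᵀ = H := aux_vecMulVec_transpose _
  have hPBK : P * vecMulVec B K = (-(1/2) : ℝ) • H := by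
    rw [hK, aux_vecMulVec_smul, Matrix.mul_smul, aux_mul_vecMulVec]
  have hE : P * (Q + vecMulVec B K) = P * Q + (-(1/2) : ℝ) • H := by
    rw [Matrix.mul_add, hPBK]
  have hsum : P * Q + Qᵀ * P = H - (2 * lam) • P := eq_sub_of_add_eq hW2
  have hfinal :
      -(((1:ℝ)/2) • (P * (Q + vecMulVec B K) + (P * (Q + vecMulVec B K))ᵀ) + q • P)
        = (lam - q) • P := by
    rw [hE]
    have htr : (P * Q + (-(1/2) : ℝ) • H)ᵀ = Qᵀ * P + (-(1/2) : ℝ) • H := by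
      rw [transpose_add, transpose_smul, transpose_mul, hPsymm, hHsym]
    rw [htr]
    have expand : (P * Q + (-(1/2) : ℝ) • H) + (Qᵀ * P + (-(1/2) : ℝ) • H)
        = (P * Q + Qᵀ * P) + (-1 : ℝ) • H := by module
    rw [expand, hsum]
    module
  rw [hfinal]
  have hpos : (0 : ℝ) < lam - q := by linarith
  refine PosDef.of_dotProduct_mulVec_pos ?_ fun x hx => ?_
  · rw [Matrix.IsHermitian, conjTranspose_eq_transpose_of_trivial, transpose_smul, hPsymm]
  · rw [smul_mulVec, dotProduct_smul, smul_eq_mul]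
    exact mul_pos hpos (hPpd.dotProduct_mulVec_pos hx)
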